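/- Let q be a prime power and let C be a linear code over F_q of length n and redundancy r that is a non-cyclic b-burst-covering code with b ≥ 2, meaning every vector in F_q^n differs from some codeword only inside a window of b consecutive coordinates (without wraparound). Then n ≥ (q^{r-b+1} - 1)/(q - 1) + b - 1. -/

import Mathlib

/-- Burst vector with first coordinate at position `i`. -/
private def burstVec (n b : ℕ) {F : Type*} [Field F] (i : ℕ) (x : F)
    (v : Fin (b - 1) → F) : Fin n → F :=
  fun m => if (m : ℕ) = i then x
    else if h : i < (m : ℕ) ∧ (m : ℕ) < i + b then v ⟨(m : ℕ) - i - 1, by omega⟩ else 0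

/-- Vector supported in the last `b` coordinates. -/
private def tailVec (n b : ℕ) {F : Type*} [Field F] (w : Fin b → F) : Fin n → F :=
  fun m => if h : n - b ≤ (m : ℕ) then w ⟨(m : ℕ) - (n - b), by have := m.isLt; omega⟩ else 0

/-- Sphere-covering bound for non-cyclic b-burst-covering linear codes:
`n ≥ (q^(r-b+1) - 1)/(q - 1) + b - 1`. -/
theorem stmt3 (q n r b : ℕ) (F : Type*) [Field F] [Fintype F]
    (hq : Fintype.card F = q)
    (hn : 0 < n) (hr : r ≤ n) (hb : 2 ≤ b)
    (C : Submodule F (Fin n → F))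
    (hdim : Module.finrank F C = n - r)
    (hcov : ∀ y : Fin n → F, ∃ c ∈ C, ∃ i : ℕ, i + b ≤ n ∧
      ∀ j : Fin n, y j ≠ c j → i ≤ (j : ℕ) ∧ (j : ℕ) < i + b) :
    n ≥ (q ^ (r - b + 1) - 1) / (q - 1) + b - 1 := by
  classical
  have hq2 : 2 ≤ q := by
    rw [← hq]; exact Fintype.one_lt_card
  -- n ≥ b
  obtain ⟨c0, -, i0, hi0, -⟩ := hcov 0
  have hbn : b ≤ n := le_trans (Nat.le_add_left b i0) hi0
  -- the quotient space
  set Q := (Fin n → F) ⧸ C with hQ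
  have hfinQ : Finite Q := Quotient.finite _
  have hfinrankQ : Module.finrank F Q = r := by
    have h1 := Submodule.finrank_quotient_add_finrank C
    have h2 : Module.finrank F (Fin n → F) = n := Module.finrank_fin_fun F
    show Module.finrank F ((Fin n → F) ⧸ C) = r
    omega
  have : Fintype Q := Fintype.ofFinite Q
  have hcardQ : Fintype.card Q = q ^ r := by
    rw [← hq, Module.card_eq_pow_finrank (K := F) (V := Q), hfinrankQ]
  -- the covering type
  let T := (Fin (n - b) × {x : F // x ≠ 0} × (Fin (b - 1) → F)) ⊕ (Fin b → F)
  let f : T → Q := fun t =>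
    match t with
    | Sum.inl (i, x, v) => Submodule.Quotient.mk (burstVec n b (i : ℕ) (x : F) v)
    | Sum.inr w => Submodule.Quotient.mk (tailVec n b w)
  have hsurj : Function.Surjective f := by
    intro z
    obtain ⟨y, rfl⟩ := Submodule.Quotient.mk_surjective C z
    obtain ⟨c, hc, i, hib, hsupp⟩ := hcov y
    set e : Fin n → F := y - c with he
    have hmk : Submodule.Quotient.mk (p := C) e = Submodule.Quotient.mk y := by
      rw [Submodule.Quotient.eq]
      simpa [he] using C.neg_mem hc
    have hsupp' : ∀ j : Fin n, e j ≠ 0 → i ≤ (j : ℕ) ∧ (j : ℕ) < i + b := by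
      intro j hj
      apply hsupp
      intro h
      apply hj
      simp [he, h]
    by_cases hA : ∀ j : Fin n, e j ≠ 0 → n - b ≤ (j : ℕ)
    · refine ⟨Sum.inr (fun k => e ⟨n - b + (k : ℕ), by have := k.isLt; omega⟩), ?_⟩
      show Submodule.Quotient.mk _ = _
      rw [← hmk]
      congr 1
      funext m
      by_cases hm : n - b ≤ (m : ℕ)
      · simp only [tailVec, dif_pos hm]
        congr 1
        ext
        simp
        omega
      · simp only [tailVec, dif_neg hm]
        by_contra hne
        exact hm (hA m (fun h => hne h.symm))
    · push_neg at hA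
      obtain ⟨j0, hj0, hj0b⟩ := hA
      have hex : ∃ k, ∃ hk : k < n, e ⟨k, hk⟩ ≠ 0 := ⟨j0, j0.isLt, hj0⟩
      set j := Nat.find hex with hjdef
      obtain ⟨hjn, hjne⟩ := Nat.find_spec hex
      have hjle : j ≤ (j0 : ℕ) := Nat.find_min' hex ⟨j0.isLt, by simpa using hj0⟩
      have hjlt : j < n - b := lt_of_le_of_lt hjle hj0b
      have hij : i ≤ j := (hsupp' ⟨j, hjn⟩ hjne).1
      refine ⟨Sum.inl (⟨j, hjlt⟩, ⟨e ⟨j, hjn⟩, hjne⟩,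
        fun k => e ⟨j + 1 + (k : ℕ), by have := k.isLt; omega⟩), ?_⟩
      show Submodule.Quotient.mk _ = _
      rw [← hmk]
      congr 1
      funext m
      by_cases hm1 : (m : ℕ) = j
      · simp only [burstVec, if_pos hm1]
        congr 1
        ext
        exact hm1.symm
      · by_cases hm2 : j < (m : ℕ) ∧ (m : ℕ) < j + b
        · simp only [burstVec, if_neg hm1, dif_pos hm2]
          congr 1
          ext
          simp
          omega
        · simp only [burstVec, if_neg hm1, dif_neg hm2]
          by_contra hne
          have hne' : e m ≠ 0 := fun h => hne h.symm
          rcases Nat.lt_or_ge (m : ℕ) j with hlt | hge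
          · exact Nat.find_min hex hlt ⟨m.isLt, by simpa using hne'⟩
          · have := hsupp' m hne'
            omega
  have hcard : Fintype.card Q ≤ Fintype.card T :=
    Fintype.card_le_of_surjective f hsurj
  have hcardT : Fintype.card T = (n - b) * ((q - 1) * q ^ (b - 1)) + q ^ b := by
    have hne : Fintype.card {x : F // x ≠ 0} = q - 1 := by
      rw [← hq]
      simp [Fintype.card_subtype_compl]
    simp [T, Fintype.card_sum, Fintype.card_prod, hne, hq]
  rw [hcardQ, hcardT] at hcard
  -- now pure arithmetic: q^r ≤ (n-b)*((q-1)*q^(b-1)) + q^b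
  rcases Nat.lt_or_ge r b with hrb | hrb
  · -- r < b : bound reduces to n ≥ b
    have h1 : r - b = 0 := Nat.sub_eq_zero_of_le (le_of_lt hrb)
    rw [h1]
    have : (q ^ 1 - 1) / (q - 1) = 1 := by
      rw [pow_one]
      exact Nat.div_self (by omega)
    rw [this]
    omega
  · -- b ≤ r
    have hkey : q ^ (r - b + 1) ≤ (n - b) * (q - 1) + q := by
      have hfac : q ^ r = q ^ (b - 1) * q ^ (r - b + 1) := by
        rw [← pow_add]
        congr 1
        omega
      have hfac2 : q ^ b = q ^ (b - 1) * q := by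
        rw [← pow_succ]
        congr 1
        omega
      have h2 : q ^ (b - 1) * q ^ (r - b + 1) ≤
          q ^ (b - 1) * ((n - b) * (q - 1) + q) := by
        calc q ^ (b - 1) * q ^ (r - b + 1) = q ^ r := hfac.symm
          _ ≤ (n - b) * ((q - 1) * q ^ (b - 1)) + q ^ b := hcard
          _ = q ^ (b - 1) * ((n - b) * (q - 1) + q) := by rw [hfac2]; ring
      exact Nat.le_of_mul_le_mul_left h2 (Nat.pow_pos (by omega))
    have hkey2 : q ^ (r - b + 1) - 1 ≤ (n - b + 1) * (q - 1) := by
      have : (n - b + 1) * (q - 1) = (n - b) * (q - 1) + (q - 1) := by ring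
      omega
    have hdiv : (q ^ (r - b + 1) - 1) / (q - 1) ≤ n - b + 1 := by
      calc (q ^ (r - b + 1) - 1) / (q - 1) ≤ (n - b + 1) * (q - 1) / (q - 1) :=
            Nat.div_le_div_right hkey2
        _ = n - b + 1 := Nat.mul_div_cancel _ (by omega)
    omega
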